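/- Under the rank condition, Δ̂ is invertible and Δ̂⁻¹ satisfies the Loewner-order bounds Ω̂_IV ≤ Δ̂⁻¹ ≤ Ω̂_LS Σ̂_V⁻¹ Ω̂_LS (i.e., Δ̂⁻¹ − Ω̂_IV and Ω̂_LS Σ̂_V⁻¹ Ω̂_LS − Δ̂⁻¹ are positive semidefinite); consequently, (β̃−β̂)ᵀ Ω̂_IV (β̃−β̂) ≤ (β̃−β̂)ᵀ Δ̂⁻¹ (β̃−β̂) ≤ (β̃−β̂)ᵀ Ω̂_LS Σ̂_V⁻¹ Ω̂_LS (β̃−β̂). -/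

import Mathlib

open Matrix

variable {T G k₁ k₂ : ℕ}

/-- Orthogonal projection `P̄[A] = A(AᵀA)⁻¹Aᵀ` onto the column space of `A`. -/
noncomputable def projM {n : Type*} [Fintype n] [DecidableEq n]
    (A : Matrix (Fin T) n ℝ) : Matrix (Fin T) (Fin T) ℝ :=
  A * (Aᵀ * A)⁻¹ * Aᵀ

/-- The annihilator `M̄[A] = I - P̄[A]`. -/
noncomputable def annM {n : Type*} [Fintype n] [DecidableEq n]
    (A : Matrix (Fin T) n ℝ) : Matrix (Fin T) (Fin T) ℝ :=
  1 - projM A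

noncomputable def M1 (X₁ : Matrix (Fin T) (Fin k₁) ℝ) : Matrix (Fin T) (Fin T) ℝ :=
  annM X₁

noncomputable def Pm (X₁ : Matrix (Fin T) (Fin k₁) ℝ) (X₂ : Matrix (Fin T) (Fin k₂) ℝ) :
    Matrix (Fin T) (Fin T) ℝ :=
  projM (fromCols X₁ X₂)

noncomputable def Mm (X₁ : Matrix (Fin T) (Fin k₁) ℝ) (X₂ : Matrix (Fin T) (Fin k₂) ℝ) :
    Matrix (Fin T) (Fin T) ℝ :=
  annM (fromCols X₁ X₂)

noncomputable def N1 (X₁ : Matrix (Fin T) (Fin k₁) ℝ) (X₂ : Matrix (Fin T) (Fin k₂) ℝ) :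
    Matrix (Fin T) (Fin T) ℝ :=
  M1 X₁ * Pm X₁ X₂

noncomputable def B1 (Y : Matrix (Fin T) (Fin G) ℝ) (X₁ : Matrix (Fin T) (Fin k₁) ℝ) :
    Matrix (Fin G) (Fin T) ℝ :=
  (Yᵀ * M1 X₁ * Y)⁻¹ * (Yᵀ * M1 X₁)

noncomputable def B2 (Y : Matrix (Fin T) (Fin G) ℝ) (X₁ : Matrix (Fin T) (Fin k₁) ℝ)
    (X₂ : Matrix (Fin T) (Fin k₂) ℝ) : Matrix (Fin G) (Fin T) ℝ :=
  (Yᵀ * N1 X₁ X₂ * Y)⁻¹ * (Yᵀ * N1 X₁ X₂)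

noncomputable def C1 (Y : Matrix (Fin T) (Fin G) ℝ) (X₁ : Matrix (Fin T) (Fin k₁) ℝ)
    (X₂ : Matrix (Fin T) (Fin k₂) ℝ) : Matrix (Fin G) (Fin T) ℝ :=
  B2 Y X₁ X₂ - B1 Y X₁

/-- OLS estimator `β̂`. -/
noncomputable def betaOLS (y : Fin T → ℝ) (Y : Matrix (Fin T) (Fin G) ℝ)
    (X₁ : Matrix (Fin T) (Fin k₁) ℝ) : Fin G → ℝ :=
  B1 Y X₁ *ᵥ y

/-- 2SLS estimator `β̃`. -/
noncomputable def beta2S (y : Fin T → ℝ) (Y : Matrix (Fin T) (Fin G) ℝ)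
    (X₁ : Matrix (Fin T) (Fin k₁) ℝ) (X₂ : Matrix (Fin T) (Fin k₂) ℝ) : Fin G → ℝ :=
  B2 Y X₁ X₂ *ᵥ y

noncomputable def OmIV (Y : Matrix (Fin T) (Fin G) ℝ) (X₁ : Matrix (Fin T) (Fin k₁) ℝ)
    (X₂ : Matrix (Fin T) (Fin k₂) ℝ) : Matrix (Fin G) (Fin G) ℝ :=
  (T : ℝ)⁻¹ • (Yᵀ * N1 X₁ X₂ * Y)

noncomputable def OmLS (Y : Matrix (Fin T) (Fin G) ℝ) (X₁ : Matrix (Fin T) (Fin k₁) ℝ) :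
    Matrix (Fin G) (Fin G) ℝ :=
  (T : ℝ)⁻¹ • (Yᵀ * M1 X₁ * Y)

noncomputable def SigV (Y : Matrix (Fin T) (Fin G) ℝ) (X₁ : Matrix (Fin T) (Fin k₁) ℝ)
    (X₂ : Matrix (Fin T) (Fin k₂) ℝ) : Matrix (Fin G) (Fin G) ℝ :=
  (T : ℝ)⁻¹ • (Yᵀ * Mm X₁ X₂ * Y)

noncomputable def Dhat (Y : Matrix (Fin T) (Fin G) ℝ) (X₁ : Matrix (Fin T) (Fin k₁) ℝ)
    (X₂ : Matrix (Fin T) (Fin k₂) ℝ) : Matrix (Fin G) (Fin G) ℝ :=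
  (OmIV Y X₁ X₂)⁻¹ - (OmLS Y X₁)⁻¹

noncomputable def Psi0 (Y : Matrix (Fin T) (Fin G) ℝ) (X₁ : Matrix (Fin T) (Fin k₁) ℝ)
    (X₂ : Matrix (Fin T) (Fin k₂) ℝ) : Matrix (Fin T) (Fin T) ℝ :=
  (C1 Y X₁ X₂)ᵀ * (Dhat Y X₁ X₂)⁻¹ * C1 Y X₁ X₂

noncomputable def N2 (Y : Matrix (Fin T) (Fin G) ℝ) (X₁ : Matrix (Fin T) (Fin k₁) ℝ)
    (X₂ : Matrix (Fin T) (Fin k₂) ℝ) : Matrix (Fin T) (Fin T) ℝ :=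
  1 - M1 X₁ * Y * B2 Y X₁ X₂

noncomputable def Lam1 (Y : Matrix (Fin T) (Fin G) ℝ) (X₁ : Matrix (Fin T) (Fin k₁) ℝ)
    (X₂ : Matrix (Fin T) (Fin k₂) ℝ) : Matrix (Fin T) (Fin T) ℝ :=
  (T : ℝ)⁻¹ • (N1 X₁ X₂ * annM (N1 X₁ X₂ * Y) * N1 X₁ X₂)

noncomputable def Lam2 (Y : Matrix (Fin T) (Fin G) ℝ) (X₁ : Matrix (Fin T) (Fin k₁) ℝ)
    (X₂ : Matrix (Fin T) (Fin k₂) ℝ) : Matrix (Fin T) (Fin T) ℝ :=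
  M1 X₁ * ((T : ℝ)⁻¹ • annM (M1 X₁ * Y) - Psi0 Y X₁ X₂) * M1 X₁

noncomputable def Lam3 (Y : Matrix (Fin T) (Fin G) ℝ) (X₁ : Matrix (Fin T) (Fin k₁) ℝ)
    (X₂ : Matrix (Fin T) (Fin k₂) ℝ) : Matrix (Fin T) (Fin T) ℝ :=
  (T : ℝ)⁻¹ • (M1 X₁ * (N2 Y X₁ X₂)ᵀ * N2 Y X₁ X₂ * M1 X₁)

noncomputable def Lam4 (Y : Matrix (Fin T) (Fin G) ℝ) (X₁ : Matrix (Fin T) (Fin k₁) ℝ) :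
    Matrix (Fin T) (Fin T) ℝ :=
  (T : ℝ)⁻¹ • (M1 X₁ * annM (M1 X₁ * Y) * M1 X₁)

def Ybar (Y : Matrix (Fin T) (Fin G) ℝ) (X₁ : Matrix (Fin T) (Fin k₁) ℝ) :
    Matrix (Fin T) (Fin G ⊕ Fin k₁) ℝ :=
  fromCols Y X₁

def Zfull (Y : Matrix (Fin T) (Fin G) ℝ) (X₁ : Matrix (Fin T) (Fin k₁) ℝ)
    (X₂ : Matrix (Fin T) (Fin k₂) ℝ) : Matrix (Fin T) (Fin G ⊕ (Fin k₁ ⊕ Fin k₂)) ℝ :=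
  fromCols Y (fromCols X₁ X₂)

noncomputable def PsiR (Y : Matrix (Fin T) (Fin G) ℝ) (X₁ : Matrix (Fin T) (Fin k₁) ℝ)
    (X₂ : Matrix (Fin T) (Fin k₂) ℝ) : Matrix (Fin T) (Fin T) ℝ :=
  (T : ℝ)⁻¹ • (annM (Ybar Y X₁) - annM (Zfull Y X₁ X₂))

noncomputable def LamR (Y : Matrix (Fin T) (Fin G) ℝ) (X₁ : Matrix (Fin T) (Fin k₁) ℝ)
    (X₂ : Matrix (Fin T) (Fin k₂) ℝ) : Matrix (Fin T) (Fin T) ℝ :=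
  (T : ℝ)⁻¹ • annM (Zfull Y X₁ X₂)

/-- `σ̂² = (1/T)(y−Yβ̂)ᵀM₁(y−Yβ̂)`. -/
noncomputable def sigHat2 (y : Fin T → ℝ) (Y : Matrix (Fin T) (Fin G) ℝ)
    (X₁ : Matrix (Fin T) (Fin k₁) ℝ) : ℝ :=
  (T : ℝ)⁻¹ * ((y - Y *ᵥ betaOLS y Y X₁) ⬝ᵥ (M1 X₁ *ᵥ (y - Y *ᵥ betaOLS y Y X₁)))

/-- `σ̃² = (1/T)(y−Yβ̃)ᵀM₁(y−Yβ̃)`. -/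
noncomputable def sigTil2 (y : Fin T → ℝ) (Y : Matrix (Fin T) (Fin G) ℝ)
    (X₁ : Matrix (Fin T) (Fin k₁) ℝ) (X₂ : Matrix (Fin T) (Fin k₂) ℝ) : ℝ :=
  (T : ℝ)⁻¹ * ((y - Y *ᵥ beta2S y Y X₁ X₂) ⬝ᵥ (M1 X₁ *ᵥ (y - Y *ᵥ beta2S y Y X₁ X₂)))

/-- `σ̃₁² = (1/T)(y−Yβ̃)ᵀN₁(y−Yβ̃)`. -/
noncomputable def sigTil1sq (y : Fin T → ℝ) (Y : Matrix (Fin T) (Fin G) ℝ)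
    (X₁ : Matrix (Fin T) (Fin k₁) ℝ) (X₂ : Matrix (Fin T) (Fin k₂) ℝ) : ℝ :=
  (T : ℝ)⁻¹ * ((y - Y *ᵥ beta2S y Y X₁ X₂) ⬝ᵥ (N1 X₁ X₂ *ᵥ (y - Y *ᵥ beta2S y Y X₁ X₂)))

/-- `σ̃₂² = σ̂² − (β̃−β̂)ᵀΔ̂⁻¹(β̃−β̂)`. -/
noncomputable def sigTil2sq (y : Fin T → ℝ) (Y : Matrix (Fin T) (Fin G) ℝ)
    (X₁ : Matrix (Fin T) (Fin k₁) ℝ) (X₂ : Matrix (Fin T) (Fin k₂) ℝ) : ℝ :=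
  sigHat2 y Y X₁ -
    (beta2S y Y X₁ X₂ - betaOLS y Y X₁) ⬝ᵥ
      ((Dhat Y X₁ X₂)⁻¹ *ᵥ (beta2S y Y X₁ X₂ - betaOLS y Y X₁))

/-- The rank condition: `X₁`, `X = [X₁, X₂]`, `[Y, X]` and `[P̄[X]Y, X₁]` all have
full column rank. -/
def RankCond (Y : Matrix (Fin T) (Fin G) ℝ) (X₁ : Matrix (Fin T) (Fin k₁) ℝ)
    (X₂ : Matrix (Fin T) (Fin k₂) ℝ) : Prop :=
  X₁.rank = k₁ ∧ (fromCols X₁ X₂).rank = k₁ + k₂ ∧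
    (fromCols Y (fromCols X₁ X₂)).rank = G + (k₁ + k₂) ∧
    (fromCols (Pm X₁ X₂ * Y) X₁).rank = G + k₁


section auxlem
set_option linter.unusedSectionVars false in
lemma mulVec_inj_of_rank' {m n : Type*} [Fintype m] [Fintype n] (A : Matrix m n ℝ)
    (h : A.rank = Fintype.card n) : Function.Injective A.mulVec := by
  have hker : LinearMap.ker A.mulVecLin = ⊥ := by
    have h2 := LinearMap.finrank_range_add_finrank_ker A.mulVecLin
    rw [Module.finrank_pi] at h2
    rw [Matrix.rank] at h
    have h0 : Module.finrank ℝ (LinearMap.ker A.mulVecLin) = 0 := by omega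
    exact Submodule.finrank_eq_zero.mp h0
  intro x y hxy
  exact LinearMap.ker_eq_bot.mp hker hxy

lemma mulVec_eq_zero_of_inj' {m n : Type*} [Fintype m] [Fintype n] {A : Matrix m n ℝ}
    (h : Function.Injective A.mulVec) {v : n → ℝ} (hv : A *ᵥ v = 0) : v = 0 := by
  apply h; rw [hv, mulVec_zero]

lemma inj_of_forall' {m n : Type*} [Fintype m] [Fintype n] {A : Matrix m n ℝ}
    (h : ∀ v, A *ᵥ v = 0 → v = 0) : Function.Injective A.mulVec := by
  intro x y hxy
  have := h (x - y) (by rw [mulVec_sub, hxy, sub_self])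
  exact sub_eq_zero.mp this

lemma posDef_transpose_mul_self' {m n : Type*} [Fintype m] [Fintype n] (A : Matrix m n ℝ)
    (h : Function.Injective A.mulVec) : (Aᵀ * A).PosDef := by
  refine PosDef.of_dotProduct_mulVec_pos (by simpa [conjTranspose_eq_transpose_of_trivial] using isHermitian_conjTranspose_mul_self A) (fun x hx => ?_)
  have h1 : (Aᵀ * A) *ᵥ x = Aᵀ *ᵥ (A *ᵥ x) := by rw [← mulVec_mulVec]
  have h2 : star x ⬝ᵥ ((Aᵀ * A) *ᵥ x) = (A *ᵥ x) ⬝ᵥ (A *ᵥ x) := by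
    rw [h1, star_trivial, dotProduct_mulVec, vecMul_transpose]
  rw [h2]
  have hAx : A *ᵥ x ≠ 0 := fun h0 => hx (mulVec_eq_zero_of_inj' h h0)
  have h3 := Matrix.dotProduct_self_star_pos_iff (v := A *ᵥ x)
  rw [star_trivial] at h3
  exact h3.mpr hAx

lemma posDef_smul_real {n : Type*} [Fintype n] {M : Matrix n n ℝ} (hM : M.PosDef) {c : ℝ}
    (hc : 0 < c) : (c • M).PosDef := by
  refine PosDef.of_dotProduct_mulVec_pos ?_ (fun x hx => ?_)
  · unfold Matrix.IsHermitian
    rw [conjTranspose_smul, star_trivial, hM.1]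
  · rw [smul_mulVec, dotProduct_smul, smul_eq_mul]
    exact mul_pos hc (hM.dotProduct_mulVec_pos hx)

lemma posSemidef_quad {n : Type*} [Fintype n] {M : Matrix n n ℝ} (hM : M.PosSemidef)
    (x : n → ℝ) : 0 ≤ x ⬝ᵥ (M *ᵥ x) := by
  have := hM.dotProduct_mulVec_nonneg x
  rwa [star_trivial] at this

lemma projM_mul_self' {T : ℕ} {n : Type*} [Fintype n] [DecidableEq n]
    {A : Matrix (Fin T) n ℝ} (h : IsUnit (Aᵀ * A)) : projM A * A = A := by
  unfold projM
  calc A * (Aᵀ * A)⁻¹ * Aᵀ * A = A * ((Aᵀ * A)⁻¹ * (Aᵀ * A)) := by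
        rw [Matrix.mul_assoc, Matrix.mul_assoc]
    _ = A := by
        rw [Matrix.nonsing_inv_mul _ ((Matrix.isUnit_iff_isUnit_det _).mp h), Matrix.mul_one]

lemma projM_transpose' {T : ℕ} {n : Type*} [Fintype n] [DecidableEq n]
    (A : Matrix (Fin T) n ℝ) : (projM A)ᵀ = projM A := by
  unfold projM
  rw [Matrix.transpose_mul, Matrix.transpose_mul, Matrix.transpose_transpose,
    Matrix.transpose_nonsing_inv, Matrix.transpose_mul, Matrix.transpose_transpose,
    Matrix.mul_assoc]

lemma projM_idem' {T : ℕ} {n : Type*} [Fintype n] [DecidableEq n]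
    {A : Matrix (Fin T) n ℝ} (h : IsUnit (Aᵀ * A)) : projM A * projM A = projM A := by
  have h1 : projM A * A = A := projM_mul_self' h
  nth_rewrite 2 [projM]
  rw [← Matrix.mul_assoc, ← Matrix.mul_assoc, h1, projM]

lemma gram_split {T : ℕ} {g : Type*} [Fintype g] (Q : Matrix (Fin T) (Fin T) ℝ)
    (hQt : Qᵀ = Q) (hQ2 : Q * Q = Q) (Y : Matrix (Fin T) g ℝ) :
    Yᵀ * Q * Y = (Q * Y)ᵀ * (Q * Y) := by
  conv_rhs => rw [transpose_mul, hQt, Matrix.mul_assoc Yᵀ Q, ← Matrix.mul_assoc Q Q, hQ2,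
    ← Matrix.mul_assoc]

lemma resid_inj {T : ℕ} {n g : Type*} [Fintype n] [DecidableEq n] [Fintype g]
    (A : Matrix (Fin T) n ℝ) (W : Matrix (Fin T) g ℝ)
    (h : Function.Injective (fromCols W A).mulVec) :
    Function.Injective (annM A * W).mulVec := by
  apply inj_of_forall'
  intro v hv
  set d : n → ℝ := -(((Aᵀ * A)⁻¹ * Aᵀ * W) *ᵥ v) with hd
  have hsum : fromCols W A *ᵥ Sum.elim v d = 0 := by
    rw [fromCols_mulVec_sumElim]
    have hA : A *ᵥ d = -((projM A * W) *ᵥ v) := by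
      rw [hd, mulVec_neg, mulVec_mulVec, projM, Matrix.mul_assoc, Matrix.mul_assoc,
        Matrix.mul_assoc]
    have hann : (annM A * W) *ᵥ v = W *ᵥ v - (projM A * W) *ᵥ v := by
      rw [annM, Matrix.sub_mul, Matrix.one_mul, sub_mulVec]
    rw [hA]
    rw [hann] at hv
    rw [← sub_eq_add_neg, hv]
  have h0 := mulVec_eq_zero_of_inj' h hsum
  funext i
  exact congrFun h0 (Sum.inl i)

lemma core_alg {g : Type*} [Fintype g] [DecidableEq g] (A B S : Matrix g g ℝ)
    (hA : A.PosDef) (hS : S.PosDef) (hB : B = A + S) :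
    IsUnit (A⁻¹ - B⁻¹) ∧ (A⁻¹ - B⁻¹)⁻¹ = B * S⁻¹ * A ∧
      ((A⁻¹ - B⁻¹)⁻¹ - A).PosSemidef ∧ (B * S⁻¹ * B - (A⁻¹ - B⁻¹)⁻¹).PosSemidef := by
  have hBpd : B.PosDef := hB ▸ hA.add_posSemidef hS.posSemidef
  have hAd : IsUnit A.det := isUnit_iff_ne_zero.mpr hA.det_pos.ne'
  have hBd : IsUnit B.det := isUnit_iff_ne_zero.mpr hBpd.det_pos.ne'
  have hSd : IsUnit S.det := isUnit_iff_ne_zero.mpr hS.det_pos.ne'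
  have hAi : A⁻¹ * A = 1 := Matrix.nonsing_inv_mul _ hAd
  have hBi : B⁻¹ * B = 1 := Matrix.nonsing_inv_mul _ hBd
  have hSi : S⁻¹ * S = 1 := Matrix.nonsing_inv_mul _ hSd
  have hSi' : S * S⁻¹ = 1 := Matrix.mul_nonsing_inv _ hSd
  have key : (A⁻¹ - B⁻¹) * (B * S⁻¹ * A) = 1 := by
    have e1 : B⁻¹ * (B * S⁻¹ * A) = S⁻¹ * A := by
      rw [← Matrix.mul_assoc, ← Matrix.mul_assoc, hBi, Matrix.one_mul]
    have e2 : A⁻¹ * (B * S⁻¹ * A) = S⁻¹ * A + 1 := by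
      have h1 : B * S⁻¹ * A = A * (S⁻¹ * A) + A := by
        rw [hB, Matrix.add_mul, Matrix.add_mul, hSi', Matrix.one_mul, Matrix.mul_assoc]
      rw [h1, Matrix.mul_add, ← Matrix.mul_assoc, hAi, Matrix.one_mul]
    rw [Matrix.sub_mul, e1, e2, add_sub_cancel_left]
  have hUnit : IsUnit (A⁻¹ - B⁻¹) := (Matrix.isUnit_iff_isUnit_det _).mpr (Matrix.isUnit_det_of_right_inverse key)
  have hDinv : (A⁻¹ - B⁻¹)⁻¹ = B * S⁻¹ * A := Matrix.inv_eq_right_inv key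
  have hBSA : B * S⁻¹ * A = A * S⁻¹ * A + A := by
    rw [hB, Matrix.add_mul, Matrix.add_mul, hSi', Matrix.one_mul]
  have hPSD1 : ((A⁻¹ - B⁻¹)⁻¹ - A).PosSemidef := by
    rw [hDinv, hBSA, add_sub_cancel_right]
    have h2 := (hS.inv.posSemidef).conjTranspose_mul_mul_same A
    rwa [hA.1] at h2
  have hPSD2 : (B * S⁻¹ * B - (A⁻¹ - B⁻¹)⁻¹).PosSemidef := by
    rw [hDinv]
    have e : B * S⁻¹ * B - B * S⁻¹ * A = B := by
      rw [← Matrix.mul_sub, hB, add_sub_cancel_left, Matrix.mul_assoc, hSi, Matrix.mul_one]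
    rw [e]
    exact hBpd.posSemidef
  exact ⟨hUnit, hDinv, hPSD1, hPSD2⟩

end auxlem

/-- Under the rank condition, `Δ̂` is invertible and `Δ̂⁻¹` satisfies the Loewner bounds
`Ω̂_IV ≤ Δ̂⁻¹ ≤ Ω̂_LS Σ̂_V⁻¹ Ω̂_LS`; consequently
`(β̃−β̂)ᵀ Ω̂_IV (β̃−β̂) ≤ (β̃−β̂)ᵀ Δ̂⁻¹ (β̃−β̂) ≤ (β̃−β̂)ᵀ Ω̂_LS Σ̂_V⁻¹ Ω̂_LS (β̃−β̂)`. -/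
theorem stmt4 {T G k₁ k₂ : ℕ}
    (hT : 0 < T) (hG : 0 < G) (hk₁ : 0 < k₁) (hk₂ : 0 < k₂)
    (y : Fin T → ℝ) (Y : Matrix (Fin T) (Fin G) ℝ)
    (X₁ : Matrix (Fin T) (Fin k₁) ℝ) (X₂ : Matrix (Fin T) (Fin k₂) ℝ)
    (hrank : RankCond Y X₁ X₂) :
    IsUnit (Dhat Y X₁ X₂) ∧
    ((Dhat Y X₁ X₂)⁻¹ - OmIV Y X₁ X₂).PosSemidef ∧
    (OmLS Y X₁ * (SigV Y X₁ X₂)⁻¹ * OmLS Y X₁ - (Dhat Y X₁ X₂)⁻¹).PosSemidef ∧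
    (beta2S y Y X₁ X₂ - betaOLS y Y X₁) ⬝ᵥ
        (OmIV Y X₁ X₂ *ᵥ (beta2S y Y X₁ X₂ - betaOLS y Y X₁))
      ≤ (beta2S y Y X₁ X₂ - betaOLS y Y X₁) ⬝ᵥ
          ((Dhat Y X₁ X₂)⁻¹ *ᵥ (beta2S y Y X₁ X₂ - betaOLS y Y X₁)) ∧
    (beta2S y Y X₁ X₂ - betaOLS y Y X₁) ⬝ᵥ
        ((Dhat Y X₁ X₂)⁻¹ *ᵥ (beta2S y Y X₁ X₂ - betaOLS y Y X₁))
      ≤ (beta2S y Y X₁ X₂ - betaOLS y Y X₁) ⬝ᵥ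
          ((OmLS Y X₁ * (SigV Y X₁ X₂)⁻¹ * OmLS Y X₁) *ᵥ
            (beta2S y Y X₁ X₂ - betaOLS y Y X₁)) := by
  obtain ⟨h1, h2, h3, h4⟩ := hrank
  set X := fromCols X₁ X₂ with hX
  have hX1inj : Function.Injective X₁.mulVec := mulVec_inj_of_rank' _ (by simpa using h1)
  have hXinj : Function.Injective X.mulVec := mulVec_inj_of_rank' _ (by simpa using h2)
  have hYXinj : Function.Injective (fromCols Y X).mulVec :=
    mulVec_inj_of_rank' _ (by simpa using h3)
  have hPYinj : Function.Injective (fromCols (Pm X₁ X₂ * Y) X₁).mulVec :=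
    mulVec_inj_of_rank' _ (by simpa using h4)
  have hX1u : IsUnit (X₁ᵀ * X₁) := (posDef_transpose_mul_self' X₁ hX1inj).isUnit
  have hXu : IsUnit (Xᵀ * X) := (posDef_transpose_mul_self' X hXinj).isUnit
  have hPt : (projM X)ᵀ = projM X := projM_transpose' X
  have hP1t : (projM X₁)ᵀ = projM X₁ := projM_transpose' X₁
  have hP2 : projM X * projM X = projM X := projM_idem' hXu
  have hP1idem : projM X₁ * projM X₁ = projM X₁ := projM_idem' hX1u
  have hPX : projM X * X = X := projM_mul_self' hXu
  have hPX1 : projM X * X₁ = X₁ := by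
    have hXF : X * fromRows (1 : Matrix (Fin k₁) (Fin k₁) ℝ)
        (0 : Matrix (Fin k₂) (Fin k₁) ℝ) = X₁ := by
      rw [hX, fromCols_mul_fromRows, Matrix.mul_one, Matrix.mul_zero, add_zero]
    calc projM X * X₁ = projM X * (X * fromRows (1 : Matrix (Fin k₁) (Fin k₁) ℝ) (0 : Matrix (Fin k₂) (Fin k₁) ℝ)) := by rw [hXF]
      _ = (projM X * X) * fromRows (1 : Matrix (Fin k₁) (Fin k₁) ℝ) (0 : Matrix (Fin k₂) (Fin k₁) ℝ) := by rw [Matrix.mul_assoc]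
      _ = X₁ := by rw [hPX, hXF]
  have hX1tP : X₁ᵀ * projM X = X₁ᵀ := by
    calc X₁ᵀ * projM X = X₁ᵀ * (projM X)ᵀ := by rw [hPt]
      _ = (projM X * X₁)ᵀ := by rw [← transpose_mul]
      _ = X₁ᵀ := by rw [hPX1]
  have hP1P : projM X₁ * projM X = projM X₁ := by
    show X₁ * (X₁ᵀ * X₁)⁻¹ * X₁ᵀ * projM X = X₁ * (X₁ᵀ * X₁)⁻¹ * X₁ᵀ
    rw [Matrix.mul_assoc, hX1tP]
  have hPP1 : projM X * projM X₁ = projM X₁ := by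
    calc projM X * projM X₁ = (projM X)ᵀ * (projM X₁)ᵀ := by rw [hPt, hP1t]
      _ = (projM X₁ * projM X)ᵀ := by rw [← transpose_mul]
      _ = projM X₁ := by rw [hP1P, hP1t]
  have hN1 : N1 X₁ X₂ = projM X - projM X₁ := by
    show (1 - projM X₁) * projM X = _
    rw [Matrix.sub_mul, Matrix.one_mul, hP1P]
  have hN1t : (N1 X₁ X₂)ᵀ = N1 X₁ X₂ := by rw [hN1, transpose_sub, hPt, hP1t]
  have hN12 : N1 X₁ X₂ * N1 X₁ X₂ = N1 X₁ X₂ := by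
    rw [hN1, Matrix.sub_mul, Matrix.mul_sub, Matrix.mul_sub, hP2, hPP1, hP1P, hP1idem]
    abel
  have hMt : (Mm X₁ X₂)ᵀ = Mm X₁ X₂ := by
    show (1 - projM X)ᵀ = 1 - projM X
    rw [transpose_sub, transpose_one, hPt]
  have hM2 : Mm X₁ X₂ * Mm X₁ X₂ = Mm X₁ X₂ := by
    show (1 - projM X) * (1 - projM X) = 1 - projM X
    rw [Matrix.sub_mul, Matrix.one_mul, Matrix.mul_sub, Matrix.mul_one, hP2]
    abel
  have hM1split : M1 X₁ = Mm X₁ X₂ + N1 X₁ X₂ := by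
    rw [hN1]
    show 1 - projM X₁ = (1 - projM X) + (projM X - projM X₁)
    abel
  have hTc : (0:ℝ) < (T : ℝ)⁻¹ := by
    have : (0:ℝ) < (T : ℝ) := by exact_mod_cast hT
    exact inv_pos.mpr this
  have hMYinj : Function.Injective (Mm X₁ X₂ * Y).mulVec := resid_inj X Y hYXinj
  have hSpd : (SigV Y X₁ X₂).PosDef := by
    have hpd : ((Mm X₁ X₂ * Y)ᵀ * (Mm X₁ X₂ * Y)).PosDef :=
      posDef_transpose_mul_self' _ hMYinj
    rw [← gram_split _ hMt hM2 Y] at hpd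
    exact posDef_smul_real hpd hTc
  have hN1Yinj : Function.Injective (N1 X₁ X₂ * Y).mulVec := by
    have h5 : Function.Injective (annM X₁ * (Pm X₁ X₂ * Y)).mulVec :=
      resid_inj X₁ (Pm X₁ X₂ * Y) hPYinj
    have e : N1 X₁ X₂ * Y = annM X₁ * (Pm X₁ X₂ * Y) := by
      show (annM X₁ * Pm X₁ X₂) * Y = _
      rw [Matrix.mul_assoc]
    rw [e]; exact h5
  have hApd : (OmIV Y X₁ X₂).PosDef := by
    have hpd : ((N1 X₁ X₂ * Y)ᵀ * (N1 X₁ X₂ * Y)).PosDef :=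
      posDef_transpose_mul_self' _ hN1Yinj
    rw [← gram_split _ hN1t hN12 Y] at hpd
    exact posDef_smul_real hpd hTc
  have hBsum : OmLS Y X₁ = OmIV Y X₁ X₂ + SigV Y X₁ X₂ := by
    show (T:ℝ)⁻¹ • (Yᵀ * M1 X₁ * Y) =
      (T:ℝ)⁻¹ • (Yᵀ * N1 X₁ X₂ * Y) + (T:ℝ)⁻¹ • (Yᵀ * Mm X₁ X₂ * Y)
    rw [hM1split, Matrix.mul_add, Matrix.add_mul, smul_add, add_comm]
  obtain ⟨hU, hDinv, hPSD1, hPSD2⟩ :=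
    core_alg (OmIV Y X₁ X₂) (OmLS Y X₁) (SigV Y X₁ X₂) hApd hSpd hBsum
  have hDd : Dhat Y X₁ X₂ = (OmIV Y X₁ X₂)⁻¹ - (OmLS Y X₁)⁻¹ := rfl
  refine ⟨hDd ▸ hU, hDd ▸ hPSD1, hDd ▸ hPSD2, ?_, ?_⟩
  · have q1 := posSemidef_quad hPSD1 (beta2S y Y X₁ X₂ - betaOLS y Y X₁)
    rw [sub_mulVec, dotProduct_sub] at q1
    rw [hDd]
    linarith
  · have q2 := posSemidef_quad hPSD2 (beta2S y Y X₁ X₂ - betaOLS y Y X₁)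
    rw [sub_mulVec, dotProduct_sub] at q2
    rw [hDd]
    linarith
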